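/- Suppose for each x ∈ I₂, t ↦ φ_t^{-1}(x) is continuously differentiable on Θ with derivative ∂φ_t^{-1}(x), φ_t^{-1}∘φ_θ ∈ L²(ε) for all t, and for every compact B ⊂ Θ, E[sup_{t∈B} |∂φ_t^{-1}∘φ_θ(ε)|⁴] < ∞. Then M(t) = E[(φ_t^{-1}∘φ_θ(ε) − ε)²] is continuously differentiable on Θ with M'(t) = −2 E[∂φ_t^{-1}(X)(ε − φ_t^{-1}(X))], where X = φ_θ(ε). -/

import Mathlib

open MeasureTheory Set

/-- `M` is continuously differentiable on `Θ` with
`M'(t) = -2 E[∂φ_t⁻¹(X)(ε - φ_t⁻¹(X))]`, where `X = φ_θ(ε)`. -/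
theorem M_continuously_differentiable
    {Ω : Type*} [MeasurableSpace Ω] (ℙ : Measure Ω) [IsProbabilityMeasure ℙ]
    (ε : Ω → ℝ) (hε : Measurable ε)
    (Θ : Set ℝ) (hΘopen : IsOpen Θ) (θ : ℝ) (hθ : θ ∈ Θ)
    (φ ψ Dψ : ℝ → ℝ → ℝ)
    (hψ : ∀ s ∈ Θ, ∀ x : ℝ, ψ s (φ s x) = x)
    (hderiv : ∀ x : ℝ, ∀ s ∈ Θ, HasDerivAt (fun u => ψ u x) (Dψ s x) s)
    (hderiv_cont : ∀ x : ℝ, ContinuousOn (fun s => Dψ s x) Θ)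
    (hL2 : ∀ s ∈ Θ, MemLp (fun ω => ψ s (φ θ (ε ω))) 2 ℙ) (hL2ε : MemLp ε 2 ℙ)
    (hsup4 : ∀ B : Set ℝ, B ⊆ Θ → IsCompact B →
      Integrable (fun ω => (⨆ s : B, |Dψ s (φ θ (ε ω))|) ^ 4) ℙ)
    (M M' : ℝ → ℝ)
    (hM : ∀ s, M s = ∫ ω, (ψ s (φ θ (ε ω)) - ε ω) ^ 2 ∂ℙ)
    (hM' : ∀ s, M' s = -2 * ∫ ω, Dψ s (φ θ (ε ω)) * (ε ω - ψ s (φ θ (ε ω))) ∂ℙ) :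
    (∀ t ∈ Θ, HasDerivAt M (M' t) t) ∧ ContinuousOn M' Θ := by
  -- abbreviation
  set X : Ω → ℝ := fun ω => φ θ (ε ω) with hX
  -- a.e. strong measurability of the derivative
  have hDmeas : ∀ s ∈ Θ, AEStronglyMeasurable (fun ω => Dψ s (X ω)) ℙ := by
    intro s hs
    obtain ⟨δ, hδ, hball⟩ := Metric.isOpen_iff.mp hΘopen s hs
    set u : ℕ → ℝ := fun n => s + (δ/2) * (1/((n : ℝ)+1)) with hu
    have hupos : ∀ n : ℕ, 0 < (δ/2) * (1/((n : ℝ)+1)) := by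
      intro n; positivity
    have huval : ∀ n : ℕ, (δ/2) * (1/((n : ℝ)+1)) ≤ δ/2 := by
      intro n
      have h1 : (1 : ℝ)/((n : ℝ)+1) ≤ 1 := by
        rw [div_le_one (by positivity)]; simp
      nlinarith [hupos n]
    have hu_mem : ∀ n, u n ∈ Θ := by
      intro n
      apply hball
      simp only [Metric.mem_ball, Real.dist_eq, hu]
      rw [add_sub_cancel_left, abs_of_pos (hupos n)]
      linarith [huval n]
    have hu_ne : ∀ n, u n ≠ s := by
      intro n
      simp only [hu, ne_eq, add_eq_left]
      exact ne_of_gt (hupos n)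
    have hu_tend : Filter.Tendsto u Filter.atTop (nhdsWithin s {s}ᶜ) := by
      rw [tendsto_nhdsWithin_iff]
      constructor
      · have : Filter.Tendsto (fun n : ℕ => s + (δ/2) * (1/((n : ℝ)+1)))
            Filter.atTop (nhds (s + (δ/2) * 0)) :=
          tendsto_const_nhds.add (tendsto_const_nhds.mul tendsto_one_div_add_atTop_nhds_zero_nat)
        simp only [mul_zero, add_zero] at this
        exact this
      · exact Filter.Eventually.of_forall fun n => hu_ne n
    apply aestronglyMeasurable_of_tendsto_ae Filter.atTop
      (f := fun n ω => (ψ (u n) (X ω) - ψ s (X ω)) * (u n - s)⁻¹)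
    · intro n
      exact ((hL2 (u n) (hu_mem n)).aestronglyMeasurable.sub
        (hL2 s hs).aestronglyMeasurable).mul_const _
    · refine Filter.Eventually.of_forall fun ω => ?_
      have h := (hasDerivAt_iff_tendsto_slope.mp (hderiv (X ω) s hs)).comp hu_tend
      convert h using 2 with n
      simp [slope_def_field, div_eq_mul_inv]
  -- local bound construction
  have key : ∀ t ∈ Θ, ∃ r : ℝ, 0 < r ∧ Metric.ball t r ⊆ Θ ∧ ∃ bound : Ω → ℝ,
      Integrable bound ℙ ∧
      ∀ ω, ∀ s ∈ Metric.ball t r, |Dψ s (X ω)| * |ψ s (X ω) - ε ω| ≤ bound ω := by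
    intro t ht
    obtain ⟨δ, hδ, hball⟩ := Metric.isOpen_iff.mp hΘopen t ht
    set r := δ/2 with hr
    have hrpos : 0 < r := by positivity
    set B := Metric.closedBall t r with hB
    have hBΘ : B ⊆ Θ := by
      intro y hy
      apply hball
      rw [Metric.mem_ball]
      calc dist y t ≤ r := hy
        _ < δ := by rw [hr]; linarith
    have hBcomp : IsCompact B := isCompact_closedBall t r
    have htB : t ∈ B := Metric.mem_closedBall_self hrpos.le
    set S : Ω → ℝ := fun ω => ⨆ s : B, |Dψ s (X ω)| with hS
    have hBdd : ∀ x : ℝ, BddAbove (Set.range fun s : B => |Dψ s x|) := by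
      intro x
      rw [show (Set.range fun s : B => |Dψ (s : ℝ) x|)
          = (fun y => |Dψ y x|) '' B from (Set.image_eq_range (fun y => |Dψ y x|) B).symm]
      exact (hBcomp.image_of_continuousOn
        ((hderiv_cont x).mono hBΘ).abs).bddAbove
    have hSle : ∀ ω, ∀ s ∈ B, |Dψ s (X ω)| ≤ S ω := by
      intro ω s hs
      exact le_ciSup (hBdd (X ω)) ⟨s, hs⟩
    have hS0 : ∀ ω, 0 ≤ S ω := fun ω =>
      le_trans (abs_nonneg _) (hSle ω t htB)
    have hMVT : ∀ ω, ∀ s ∈ B, |ψ s (X ω) - ψ t (X ω)| ≤ S ω * r := by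
      intro ω s hs
      have h := Convex.norm_image_sub_le_of_norm_hasDerivWithin_le
        (f := fun u => ψ u (X ω)) (f' := fun u => Dψ u (X ω)) (s := B) (C := S ω)
        (fun u hu => (hderiv (X ω) u (hBΘ hu)).hasDerivWithinAt)
        (fun u hu => by rw [Real.norm_eq_abs]; exact hSle ω u hu)
        (convex_closedBall t r) htB hs
      rw [Real.norm_eq_abs, Real.norm_eq_abs] at h
      refine h.trans ?_
      have : |s - t| ≤ r := by
        rw [← Real.dist_eq]; exact hs
      exact mul_le_mul_of_nonneg_left this (hS0 ω)
    refine ⟨r, hrpos, fun y hy => hBΘ (Metric.ball_subset_closedBall hy),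
      fun ω => (1 + 2*r) * (1 + S ω ^ 4) + (ψ t (X ω) - ε ω) ^ 2, ?_, ?_⟩
    · exact (((integrable_const (1:ℝ)).add (hsup4 B hBΘ hBcomp)).const_mul _).add
        ((hL2 t ht).sub hL2ε).integrable_sq
    · intro ω s hs
      have hsB : s ∈ B := Metric.ball_subset_closedBall hs
      have h1 : |Dψ s (X ω)| ≤ S ω := hSle ω s hsB
      have h2 : |ψ s (X ω) - ψ t (X ω)| ≤ S ω * r := hMVT ω s hsB
      have h3 : |ψ s (X ω) - ε ω| ≤ |ψ s (X ω) - ψ t (X ω)| + |ψ t (X ω) - ε ω| :=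
        abs_sub_le _ _ _
      have h4 : |ψ s (X ω) - ε ω| ≤ |ψ t (X ω) - ε ω| + S ω * r := by linarith
      have h5 : |Dψ s (X ω)| * |ψ s (X ω) - ε ω| ≤ S ω * (|ψ t (X ω) - ε ω| + S ω * r) :=
        mul_le_mul h1 h4 (abs_nonneg _) (hS0 ω)
      refine h5.trans ?_
      beta_reduce
      have hga : |ψ t (X ω) - ε ω| ^ 2 = (ψ t (X ω) - ε ω) ^ 2 := sq_abs _
      nlinarith [sq_nonneg (S ω - |ψ t (X ω) - ε ω|), sq_nonneg (S ω ^ 2 - 1),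
        mul_nonneg hrpos.le (sq_nonneg (S ω ^ 2 - 1)), hS0 ω, abs_nonneg (ψ t (X ω) - ε ω),
        mul_nonneg hrpos.le (hS0 ω)]
  constructor
  · -- differentiability
    intro t ht
    obtain ⟨r, hrpos, hballΘ, bound, hbound_int, hbound⟩ := key t ht
    set F : ℝ → Ω → ℝ := fun s ω => (ψ s (X ω) - ε ω) ^ 2 with hF
    set F' : ℝ → Ω → ℝ := fun s ω => 2 * (ψ s (X ω) - ε ω) * Dψ s (X ω) with hF'
    have hkey := hasDerivAt_integral_of_dominated_loc_of_deriv_le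
      (F := F) (F' := F') (x₀ := t) (bound := fun ω => 2 * bound ω) (Metric.ball_mem_nhds t hrpos)
      (by
        filter_upwards [hΘopen.mem_nhds ht] with s hs
        have h := (hL2 s hs).aestronglyMeasurable.sub hL2ε.aestronglyMeasurable
        have h2 : AEStronglyMeasurable (fun ω => (ψ s (X ω) - ε ω) * (ψ s (X ω) - ε ω)) ℙ := h.mul h
        simpa only [hF, pow_two] using h2)
      (((hL2 t ht).sub hL2ε).integrable_sq)
      ((((hL2 t ht).aestronglyMeasurable.sub hL2ε.aestronglyMeasurable).const_mul 2).mul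
        (hDmeas t ht))
      (by
        refine Filter.Eventually.of_forall fun ω => fun s hs => ?_
        have h := hbound ω s hs
        simp only [hF', Real.norm_eq_abs]
        rw [abs_mul, abs_mul, abs_two]
        nlinarith [abs_nonneg (Dψ s (X ω)), abs_nonneg (ψ s (X ω) - ε ω)])
      (hbound_int.const_mul 2)
      (by
        refine Filter.Eventually.of_forall fun ω => fun s hs => ?_
        have h := ((hderiv (X ω) s (hballΘ hs)).sub_const (ε ω)).pow 2
        convert h using 1
        norm_num
        rfl
        · funext x; simp [hF, Pi.pow_apply]
        · rw [hF']; norm_num)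
    have hMeq : M = fun s => ∫ ω, F s ω ∂ℙ := funext hM
    have hM'eq : M' t = ∫ ω, F' t ω ∂ℙ := by
      rw [hM' t, ← integral_const_mul]
      exact integral_congr_ae (Filter.Eventually.of_forall fun ω => by ring)
    rw [hMeq, hM'eq]
    exact hkey.2
  · -- continuity of M'
    intro t ht
    apply ContinuousAt.continuousWithinAt
    obtain ⟨r, hrpos, hballΘ, bound, hbound_int, hbound⟩ := key t ht
    have hM'fun : M' = fun s => -2 * ∫ ω, Dψ s (X ω) * (ε ω - ψ s (X ω)) ∂ℙ := funext hM'
    rw [hM'fun]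
    refine continuousAt_const.mul ?_
    apply continuousAt_of_dominated (bound := bound)
    · filter_upwards [hΘopen.mem_nhds ht] with s hs
      exact (hDmeas s hs).mul
        (hL2ε.aestronglyMeasurable.sub (hL2 s hs).aestronglyMeasurable)
    · filter_upwards [Metric.ball_mem_nhds t hrpos] with s hs
      refine Filter.Eventually.of_forall fun ω => ?_
      have h := hbound ω s hs
      rw [Real.norm_eq_abs, abs_mul, abs_sub_comm (ε ω) (ψ s (X ω))]
      exact h
    · exact hbound_int
    · refine Filter.Eventually.of_forall fun ω => ?_
      exact ((hderiv_cont (X ω)).continuousAt (hΘopen.mem_nhds ht)).mul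
        (continuousAt_const.sub (hderiv (X ω) t ht).continuousAt)
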